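/- If two states S₁ = ⟨s₁,h₁⟩ and S₂ = ⟨s₂,h₂⟩ have disjoint heap domains and their stores agree on common variables, and t₁, t₂ are tree decompositions of S₁, S₂ of widths w₁, w₂ respectively, then the state S₁ ⊎ S₂ admits a tree decomposition of width at most max(w₁, w₂, |D| - 1) + |D|, where D is the set of locations shared between loc(S₁) and loc(S₂). In particular, if the set of shared locations is bounded, composing two bounded-tree-width states yields a bounded-tree-width state. -/

import Mathlib

namespace SLTW

/-- Tree positions: finite sequences of naturals. -/
abbrev Pos := List ℕ

/-- `parentOf p q` : `p` is the parent of `q`, i.e. `q = p.i`. -/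
def parentOf (p q : Pos) : Prop := ∃ i : ℕ, q = p ++ [i]

/-- Adjacency in a tree: parent in either direction. -/
def adj (p q : Pos) : Prop := parentOf p q ∨ parentOf q p

/-- A path in a tree with domain `D` from `p` to `q`: pairwise distinct positions,
consecutive ones related by the parent relation. -/
def isPath (D : Set Pos) (l : List Pos) (p q : Pos) : Prop :=
  l ≠ [] ∧ l.Chain' adj ∧ l.Nodup ∧ (∀ x ∈ l, x ∈ D) ∧ l.head? = some p ∧ l.getLast? = some q

/-- `q` lies on some path from `p` to `r` in the tree with domain `D`. -/
def onPath (D : Set Pos) (q p r : Pos) : Prop := ∃ l, isPath D l p r ∧ q ∈ l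

/-- A prefix-closed set of tree positions. -/
def prefixClosed (D : Set Pos) : Prop := ∀ p q : Pos, p <+: q → q ∈ D → p ∈ D

/-- A tree decomposition of a graph with vertex set `V` and (directed) edge set `E`. -/
structure TreeDecomp {α : Type} (V : Set α) (E : Set (α × α)) where
  dom : Set Pos
  bag : Pos → Set α
  dom_fin : dom.Finite
  dom_pc : prefixClosed dom
  cover_v : ∀ v ∈ V, ∃ p ∈ dom, v ∈ bag p
  cover_e : ∀ e ∈ E, ∃ p ∈ dom, e.1 ∈ bag p ∧ e.2 ∈ bag p
  conn : ∀ p q r, p ∈ dom → q ∈ dom → r ∈ dom → onPath dom q p r →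
    bag p ∩ bag r ⊆ bag q

/-- The decomposition has width at most `w`: every bag is finite of cardinality `≤ w + 1`. -/
def TreeDecomp.widthLE {α : Type} {V : Set α} {E : Set (α × α)}
    (t : TreeDecomp V E) (w : ℕ) : Prop :=
  ∀ p ∈ t.dom, (t.bag p).Finite ∧ (t.bag p).ncard ≤ w + 1

/-- The graph `(V, E)` has tree width at most `w`. -/
def twLE {α : Type} (V : Set α) (E : Set (α × α)) (w : ℕ) : Prop :=
  ∃ t : TreeDecomp V E, t.widthLE w

/-! ### States of Separation Logic -/

abbrev Loc := ℕ
abbrev PVar := ℕ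
abbrev Sel := ℕ
abbrev Heap := Loc → Option (Sel → Option Loc)
abbrev Store := PVar → Option Loc

structure SLState where
  store : Store
  heap : Heap

/-- Domain of the heap (allocated locations). -/
def SLState.hdom (S : SLState) : Set Loc := {l | S.heap l ≠ none}
/-- Image of the store. -/
def SLState.simg (S : SLState) : Set Loc := {l | ∃ u, S.store u = some l}
/-- Image of the heap: destinations of selector edges. -/
def SLState.hImg (S : SLState) : Set Loc :=
  {l | ∃ a f k, S.heap a = some f ∧ f k = some l}
/-- All locations of a state. -/
def SLState.locs (S : SLState) : Set Loc := S.simg ∪ S.hdom ∪ S.hImg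
/-- Edges of the state, seen as a graph. -/
def SLState.edges (S : SLState) : Set (Loc × Loc) :=
  {e | ∃ f k, S.heap e.1 = some f ∧ f k = some e.2}
/-- Tree width of a state is at most `w`. -/
def SLState.twLE (S : SLState) (w : ℕ) : Prop := SLTW.twLE S.locs S.edges w



/-! ### Syntax of basic SL formulae -/

abbrev LVar := ℕ
/-- Variables: program variables or logical variables. -/
abbrev Var := PVar ⊕ LVar

/-- Combined evaluation `s ⊕ ι` of program and logical variables. -/
def eval (s : Store) (ι : LVar → Option Loc) : Var → Option Loc
  | Sum.inl u => s u
  | Sum.inr x => ι x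

inductive PureF where
  | eq (a b : Var)
  | ne (a b : Var)
  | and (p q : PureF)

inductive SpatialF where
  | emp
  | pto (a : Var) (bs : List Var)
  | star (s₁ s₂ : SpatialF)

inductive BasicF where
  | base (p : PureF) (s : SpatialF)
  | ex (x : LVar) (f : BasicF)

/-- Number of variable occurrences in a spatial formula. -/
def SpatialF.size : SpatialF → ℕ
  | .emp => 0
  | .pto _ bs => 1 + bs.length
  | .star s₁ s₂ => s₁.size + s₂.size

/-- Size of a basic formula: variable occurrences of its spatial part. -/
def BasicF.size : BasicF → ℕ
  | .base _ s => s.size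
  | .ex _ f => f.size

/-- Two heaps have disjoint domains. -/
def heapDisj (h₁ h₂ : Heap) : Prop := ∀ l, h₁ l = none ∨ h₂ l = none

/-- Union of two heaps (left-biased, used under disjointness). -/
def heapUnion (h₁ h₂ : Heap) : Heap := fun l => (h₁ l).orElse (fun _ => h₂ l)

/-- The heap of a single allocated cell at `la` with selectors `1..n` pointing to
the evaluations of `bs` (strict semantics). -/
def ptoHeap (s : Store) (ι : LVar → Option Loc) (la : Loc) (bs : List Var) : Heap :=
  fun l => if l = la then
    some (fun k => if 1 ≤ k ∧ k ≤ bs.length then eval s ι (bs.getD (k-1) (Sum.inr 0)) else none)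
  else none

def PureSat (S : SLState) (ι : LVar → Option Loc) : PureF → Prop
  | .eq a b => eval S.store ι a = eval S.store ι b ∧ eval S.store ι a ≠ none
  | .ne a b => eval S.store ι a ≠ eval S.store ι b ∧
      eval S.store ι a ≠ none ∧ eval S.store ι b ≠ none
  | .and p q => PureSat S ι p ∧ PureSat S ι q

/-- Strict semantics of spatial formulae. -/
def SpSat (S : SLState) (ι : LVar → Option Loc) : SpatialF → Prop
  | .emp => ∀ l, S.heap l = none
  | .pto a bs => ∃ la, eval S.store ι a = some la ∧ (∀ b ∈ bs, eval S.store ι b ≠ none) ∧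
      S.heap = ptoHeap S.store ι la bs
  | .star s₁ s₂ => ∃ h₁ h₂, heapDisj h₁ h₂ ∧ S.heap = heapUnion h₁ h₂ ∧
      SpSat ⟨S.store, h₁⟩ ι s₁ ∧ SpSat ⟨S.store, h₂⟩ ι s₂

def BasicSat (S : SLState) (ι : LVar → Option Loc) : BasicF → Prop
  | .base p s => PureSat S ι p ∧ SpSat S ι s
  | .ex x f => ∃ l : Loc, BasicSat S (Function.update ι x (some l)) f

/-- Iterated separating conjunction. -/
def bigStar (l : List SpatialF) : SpatialF := l.foldr SpatialF.star SpatialF.emp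



lemma prefix_snoc {u x : List ℕ} {i : ℕ} (h : u <+: x ++ [i]) : u <+: x ∨ u = x ++ [i] := by
  rcases h with ⟨t, ht⟩
  rcases List.eq_nil_or_concat t with rfl | ⟨t', a, rfl⟩
  · right; simpa using ht
  · left
    have h2 : (u ++ t') ++ [a] = x ++ [i] := by simpa using ht
    have := congrArg List.dropLast h2
    simp at this
    exact ⟨t', this⟩

lemma chain_enter (u : Pos) : ∀ l : List Pos, l.Chain' adj →
    ∀ a b, l.head? = some a → ¬ u <+: a → l.getLast? = some b → u <+: b → u ∈ l := by
  intro l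
  induction l with
  | nil => intro _ a b h; simp at h
  | cons x t ih =>
    intro hch a b hh hna hl hb
    simp only [List.head?_cons, Option.some.injEq] at hh
    subst hh
    cases t with
    | nil =>
      simp only [List.getLast?_singleton, Option.some.injEq] at hl
      subst hl
      exact absurd hb hna
    | cons y t' =>
      have hadj : adj x y := (List.isChain_cons_cons.mp hch).1
      have hch' := (List.isChain_cons_cons.mp hch).2
      have hl' : (y::t').getLast? = some b := by rwa [List.getLast?_cons_cons] at hl
      by_cases hy : u <+: y
      · have : y = u := by
          rcases hadj with ⟨i, rfl⟩ | ⟨i, rfl⟩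
          · rcases prefix_snoc hy with h | h
            · exact absurd h hna
            · exact h.symm
          · exact absurd (hy.trans ⟨[i], rfl⟩) hna
        exact this ▸ List.mem_cons_of_mem _ List.mem_cons_self
      · exact List.mem_cons_of_mem _ (ih hch' y b rfl hy hl' hb)

lemma chain_all_prefix (u : Pos) : ∀ l : List Pos, l.Chain' adj → l.Nodup →
    ∀ a b, l.head? = some a → u <+: a → l.getLast? = some b → u <+: b →
    ∀ x ∈ l, u <+: x := by
  intro l
  induction l with
  | nil => simp
  | cons x t ih =>
    intro hch hnd a b hh ha hl hb y hy
    simp only [List.head?_cons, Option.some.injEq] at hh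
    subst hh
    rcases List.mem_cons.mp hy with rfl | hy
    · exact ha
    cases t with
    | nil => simp at hy
    | cons z t' =>
      have hadj := (List.isChain_cons_cons.mp hch).1
      have hch' := (List.isChain_cons_cons.mp hch).2
      have hl' : (z::t').getLast? = some b := by rwa [List.getLast?_cons_cons] at hl
      by_cases hz : u <+: z
      · exact ih hch' (List.nodup_cons.mp hnd).2 z b rfl hz hl' hb y hy
      · exfalso
        have hxu : x = u := by
          rcases hadj with ⟨i, rfl⟩ | ⟨i, rfl⟩
          · exact absurd (ha.trans ⟨[i], rfl⟩) hz
          · rcases prefix_snoc ha with h | h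
            · exact absurd h hz
            · exact h.symm
        have hmem := chain_enter u (z::t') hch' z b rfl hz hl' hb
        exact (hxu ▸ (List.nodup_cons.mp hnd).1) hmem

lemma chain'_imp_mem {R S : Pos → Pos → Prop} :
    ∀ {l : List Pos}, l.Chain' R → (∀ a ∈ l, ∀ b ∈ l, R a b → S a b) → l.Chain' S := by
  intro l
  induction l with
  | nil => intro _ _; exact List.isChain_nil
  | cons x t ih =>
    intro hch H
    cases t with
    | nil => exact List.isChain_singleton _
    | cons y t' =>
      unfold List.Chain' at hch ⊢
      rw [List.isChain_cons_cons] at hch ⊢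
      exact ⟨H x (by simp) y (by simp) hch.1,
        ih hch.2 (fun a ha b hb => H a (List.mem_cons_of_mem _ ha) b (List.mem_cons_of_mem _ hb))⟩

lemma path_in_subtree {α : Type} {V : Set α} {E : Set (α × α)} (t : TreeDecomp V E) (j : ℕ)
    (dom0 : Set Pos) (hdom : ∀ x ∈ dom0, [j] <+: x → x.tail ∈ t.dom)
    {l : List Pos} {p' r' : Pos}
    (hpath : isPath dom0 l (j :: p') (j :: r')) :
    isPath t.dom (l.map List.tail) p' r' ∧ ∀ x ∈ l, [j] <+: x := by
  obtain ⟨hne, hch, hnd, hmem, hhd, hlast⟩ := hpath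
  have hall : ∀ x ∈ l, [j] <+: x :=
    chain_all_prefix [j] l hch hnd _ _ hhd ⟨p', rfl⟩ hlast ⟨r', rfl⟩
  refine ⟨⟨by simpa using hne, ?_, ?_, ?_, ?_, ?_⟩, hall⟩
  · unfold List.Chain'
    rw [List.isChain_map]
    refine chain'_imp_mem hch ?_
    intro a ha b hb hab
    obtain ⟨a', rfl⟩ := hall a ha
    obtain ⟨b', rfl⟩ := hall b hb
    rcases hab with ⟨i, hi⟩ | ⟨i, hi⟩
    · exact Or.inl ⟨i, by simpa using congrArg List.tail hi⟩
    · exact Or.inr ⟨i, by simpa using congrArg List.tail hi⟩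
  · refine hnd.map_on ?_
    intro x hx y hy hxy
    obtain ⟨x', rfl⟩ := hall x hx
    obtain ⟨y', rfl⟩ := hall y hy
    simpa using hxy
  · intro x hx
    rcases List.mem_map.mp hx with ⟨y, hy, rfl⟩
    exact hdom y (hmem y hy) (hall y hy)
  · rw [List.head?_map, hhd]; rfl
  · rw [List.getLast?_map, hlast]; rfl

end SLTW
open SLTW in
/-- composing tree decompositions of two compatible states gives a
tree decomposition of the union state of width at most `max (max w₁ w₂) (|D|-1) + |D|`,
where `D` is the set of shared locations. -/
theorem union_state_treewidth (S₁ S₂ : SLState) (w₁ w₂ : ℕ)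
    (hdisj : heapDisj S₁.heap S₂.heap)
    (hagree : ∀ u l₁ l₂, S₁.store u = some l₁ → S₂.store u = some l₂ → l₁ = l₂)
    (t₁ : TreeDecomp S₁.locs S₁.edges) (ht₁ : t₁.widthLE w₁)
    (t₂ : TreeDecomp S₂.locs S₂.edges) (ht₂ : t₂.widthLE w₂)
    (hDfin : (S₁.locs ∩ S₂.locs).Finite) :
    SLState.twLE ⟨fun u => (S₁.store u).orElse (fun _ => S₂.store u), heapUnion S₁.heap S₂.heap⟩
      (max (max w₁ w₂) ((S₁.locs ∩ S₂.locs).ncard - 1) + (S₁.locs ∩ S₂.locs).ncard) := by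
  classical
  set D : Set Loc := S₁.locs ∩ S₂.locs with hDdef
  -- locations / edges of the union state decompose
  have hlocs : ∀ v, v ∈ (SLState.mk (fun u => (S₁.store u).orElse fun _ => S₂.store u)
      (heapUnion S₁.heap S₂.heap)).locs → v ∈ S₁.locs ∪ S₂.locs := by
    intro v hv
    rcases hv with (⟨u, hu⟩ | hv) | ⟨a, f, k, hf, hk⟩
    · cases h1 : S₁.store u with
      | some x =>
        left; left; left
        refine ⟨u, ?_⟩
        simp [h1, Option.orElse] at hu
        rw [h1, hu]
      | none =>
        right; left; left
        refine ⟨u, ?_⟩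
        simpa [h1, Option.orElse] using hu
    · by_cases h1 : S₁.heap v = none
      · right; left; right
        have : heapUnion S₁.heap S₂.heap v = S₂.heap v := by simp [heapUnion, h1, Option.orElse]
        simpa [SLState.hdom, this] using hv
      · left; left; right; exact h1
    · by_cases h1 : S₁.heap a = none
      · right; right
        have : heapUnion S₁.heap S₂.heap a = S₂.heap a := by simp [heapUnion, h1, Option.orElse]
        exact ⟨a, f, k, by rw [← this]; exact hf, hk⟩
      · left; right
        obtain ⟨g, hg⟩ := Option.ne_none_iff_exists'.mp h1
        have hf' : heapUnion S₁.heap S₂.heap a = some f := hf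
        have : heapUnion S₁.heap S₂.heap a = some g := by simp [heapUnion, hg, Option.orElse]
        rw [this] at hf'
        exact ⟨a, f, k, by rw [hg, hf'], hk⟩
  have hedges : ∀ e, e ∈ (SLState.mk (fun u => (S₁.store u).orElse fun _ => S₂.store u)
      (heapUnion S₁.heap S₂.heap)).edges → e ∈ S₁.edges ∪ S₂.edges := by
    rintro e ⟨f, k, hf, hk⟩
    by_cases h1 : S₁.heap e.1 = none
    · right
      have : heapUnion S₁.heap S₂.heap e.1 = S₂.heap e.1 := by simp [heapUnion, h1, Option.orElse]
      exact ⟨f, k, by rw [← this]; exact hf, hk⟩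
    · left
      obtain ⟨g, hg⟩ := Option.ne_none_iff_exists'.mp h1
      have hf' : heapUnion S₁.heap S₂.heap e.1 = some f := hf
      have : heapUnion S₁.heap S₂.heap e.1 = some g := by simp [heapUnion, hg, Option.orElse]
      rw [this] at hf'
      exact ⟨f, k, by rw [hg, hf'], hk⟩
  have hend : ∀ (S : SLState), ∀ e ∈ S.edges, e.1 ∈ S.locs ∧ e.2 ∈ S.locs := by
    rintro S e ⟨f, k, hf, hk⟩
    exact ⟨Or.inl (Or.inr (by simp [SLState.hdom, hf])), Or.inr ⟨e.1, f, k, hf, hk⟩⟩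
  -- the combined decomposition
  set dom0 : Set Pos := {[]} ∪ (List.cons 0 '' t₁.dom) ∪ (List.cons 1 '' t₂.dom) with hdom0
  set ebag : Pos → Set Loc := fun p =>
    match p with
    | 0 :: p' => t₁.bag p' ∩ S₁.locs
    | 1 :: p' => t₂.bag p' ∩ S₂.locs
    | _ => ∅ with hebag
  have hdom0E : ∀ x ∈ dom0, x = [] ∨ (∃ p', x = 0::p' ∧ p' ∈ t₁.dom) ∨
      (∃ p', x = 1::p' ∧ p' ∈ t₂.dom) := by
    rintro x ((hx | ⟨p', hp', rfl⟩) | ⟨p', hp', rfl⟩)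
    · exact Or.inl hx
    · exact Or.inr (Or.inl ⟨p', rfl, hp'⟩)
    · exact Or.inr (Or.inr ⟨p', rfl, hp'⟩)
  have hsub0 : ∀ y ∈ dom0, [0] <+: y → y.tail ∈ t₁.dom := by
    intro y hy hpre
    rcases hdom0E y hy with rfl | ⟨p', rfl, hp'⟩ | ⟨p', rfl, hp'⟩
    · simpa using hpre.length_le
    · exact hp'
    · rcases List.cons_prefix_cons.mp hpre with ⟨h01, -⟩; omega
  have hsub1 : ∀ y ∈ dom0, [1] <+: y → y.tail ∈ t₂.dom := by
    intro y hy hpre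
    rcases hdom0E y hy with rfl | ⟨p', rfl, hp'⟩ | ⟨p', rfl, hp'⟩
    · simpa using hpre.length_le
    · rcases List.cons_prefix_cons.mp hpre with ⟨h01, -⟩; omega
    · exact hp'
  refine ⟨⟨dom0, fun p => D ∪ ebag p, ?_, ?_, ?_, ?_, ?_⟩, ?_⟩
  · exact (((Set.finite_singleton _).union (t₁.dom_fin.image _)).union (t₂.dom_fin.image _))
  · -- prefix closed
    intro p q hpq hq
    rcases hdom0E q hq with rfl | ⟨q', rfl, hq'⟩ | ⟨q', rfl, hq'⟩
    · exact Or.inl (Or.inl (List.prefix_nil.mp hpq))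
    · cases p with
      | nil => exact Or.inl (Or.inl rfl)
      | cons a p' =>
        rcases List.cons_prefix_cons.mp hpq with ⟨rfl, hpp⟩
        exact Or.inl (Or.inr ⟨p', t₁.dom_pc p' q' hpp hq', rfl⟩)
    · cases p with
      | nil => exact Or.inl (Or.inl rfl)
      | cons a p' =>
        rcases List.cons_prefix_cons.mp hpq with ⟨rfl, hpp⟩
        exact Or.inr ⟨p', t₂.dom_pc p' q' hpp hq', rfl⟩
  · -- cover_v
    intro v hv
    rcases hlocs v hv with hv1 | hv2
    · obtain ⟨p, hp, hb⟩ := t₁.cover_v v hv1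
      exact ⟨0 :: p, Or.inl (Or.inr ⟨p, hp, rfl⟩), Or.inr ⟨hb, hv1⟩⟩
    · obtain ⟨p, hp, hb⟩ := t₂.cover_v v hv2
      exact ⟨1 :: p, Or.inr ⟨p, hp, rfl⟩, Or.inr ⟨hb, hv2⟩⟩
  · -- cover_e
    intro e he
    rcases hedges e he with he1 | he2
    · obtain ⟨p, hp, hb1, hb2⟩ := t₁.cover_e e he1
      obtain ⟨hl1, hl2⟩ := hend S₁ e he1
      exact ⟨0 :: p, Or.inl (Or.inr ⟨p, hp, rfl⟩), Or.inr ⟨hb1, hl1⟩, Or.inr ⟨hb2, hl2⟩⟩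
    · obtain ⟨p, hp, hb1, hb2⟩ := t₂.cover_e e he2
      obtain ⟨hl1, hl2⟩ := hend S₂ e he2
      exact ⟨1 :: p, Or.inr ⟨p, hp, rfl⟩, Or.inr ⟨hb1, hl1⟩, Or.inr ⟨hb2, hl2⟩⟩
  · -- connectivity
    rintro p q r hp hq hr ⟨l, hpath, hql⟩ x ⟨hxp, hxr⟩
    have hDq : D ⊆ D ∪ ebag q := Set.subset_union_left
    rcases hxp with hxD | hxp
    · exact hDq hxD
    rcases hxr with hxD | hxr
    · exact hDq hxD
    rcases hdom0E p hp with rfl | ⟨p', rfl, hp'⟩ | ⟨p', rfl, hp'⟩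
    · exact hxp.elim
    · rcases hdom0E r hr with rfl | ⟨r', rfl, hr'⟩ | ⟨r', rfl, hr'⟩
      · exact hxr.elim
      · -- both in subtree 0
        obtain ⟨hpath', hall⟩ := path_in_subtree t₁ 0 dom0 hsub0 hpath
        obtain ⟨q', rfl⟩ := hall q hql
        have hq' : q' ∈ t₁.dom := hsub0 _ hq (hall _ hql)
        have hconn := t₁.conn p' q' r' hp' hq' hr'
          ⟨l.map List.tail, hpath', List.mem_map_of_mem hql⟩
        exact Or.inr ⟨hconn ⟨hxp.1, hxr.1⟩, hxp.2⟩
      · exact hDq ⟨hxp.2, hxr.2⟩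
    · rcases hdom0E r hr with rfl | ⟨r', rfl, hr'⟩ | ⟨r', rfl, hr'⟩
      · exact hxr.elim
      · exact hDq ⟨hxr.2, hxp.2⟩
      · -- both in subtree 1
        obtain ⟨hpath', hall⟩ := path_in_subtree t₂ 1 dom0 hsub1 hpath
        obtain ⟨q', rfl⟩ := hall q hql
        have hq' : q' ∈ t₂.dom := hsub1 _ hq (hall _ hql)
        have hconn := t₂.conn p' q' r' hp' hq' hr'
          ⟨l.map List.tail, hpath', List.mem_map_of_mem hql⟩
        exact Or.inr ⟨hconn ⟨hxp.1, hxr.1⟩, hxp.2⟩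
  · -- width bound
    intro p hp
    rcases hdom0E p hp with rfl | ⟨p', rfl, hp'⟩ | ⟨p', rfl, hp'⟩
    · refine ⟨hDfin.union (Set.finite_empty), ?_⟩
      show (D ∪ (∅ : Set Loc)).ncard ≤ _
      rw [Set.union_empty]; omega
    · obtain ⟨hfin, hcard⟩ := ht₁ p' hp'
      refine ⟨hDfin.union (hfin.subset Set.inter_subset_left), ?_⟩
      have h1 := Set.ncard_union_le D (t₁.bag p' ∩ S₁.locs)
      have h2 : (t₁.bag p' ∩ S₁.locs).ncard ≤ (t₁.bag p').ncard :=
        Set.ncard_le_ncard Set.inter_subset_left hfin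
      have h3 : w₁ ≤ max (max w₁ w₂) (D.ncard - 1) := le_trans (le_max_left _ _) (le_max_left _ _)
      show (D ∪ (t₁.bag p' ∩ S₁.locs)).ncard ≤ _
      omega
    · obtain ⟨hfin, hcard⟩ := ht₂ p' hp'
      refine ⟨hDfin.union (hfin.subset Set.inter_subset_left), ?_⟩
      have h1 := Set.ncard_union_le D (t₂.bag p' ∩ S₂.locs)
      have h2 : (t₂.bag p' ∩ S₂.locs).ncard ≤ (t₂.bag p').ncard :=
        Set.ncard_le_ncard Set.inter_subset_left hfin
      have h3 : w₂ ≤ max (max w₁ w₂) (D.ncard - 1) := le_trans (le_max_right _ _) (le_max_left _ _)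
      show (D ∪ (t₂.bag p' ∩ S₂.locs)).ncard ≤ _
      omega
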